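/- If g : Ω → ℝ≥0 is measurable and log⁺ g is integrable for a measure-preserving transformation θ, then almost surely limsup_{n→∞} (1/n) log⁺ g(θⁿω) = 0; in particular, for every ε > 0, g(θⁿω) ≤ e^{εn} for all sufficiently large n, almost surely. -/
import Mathlib


open MeasureTheory Filter
open scoped ENNReal

/-- If `g : Ω → [0,∞)` is measurable and `log⁺ g` is integrable for a
measure-preserving transformation `θ`, then almost surely
`limsup (1/n) log⁺ g(θⁿω) = 0`; in particular, for every `ε > 0`,
`g(θⁿω) ≤ e^{εn}` for all sufficiently large `n`, almost surely. -/
theorem stmt_12 {Ω : Type*} [MeasurableSpace Ω] (μ : Measure Ω)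
    [IsProbabilityMeasure μ] (θ : Ω → Ω) (hθ : MeasurePreserving θ μ μ)
    (g : Ω → ℝ) (hg : Measurable g) (hg0 : ∀ ω, 0 ≤ g ω)
    (hint : Integrable (fun ω => max (Real.log (g ω)) 0) μ) :
    ∀ᵐ ω ∂μ,
      limsup (fun n : ℕ => (n : ℝ)⁻¹ * max (Real.log (g (θ^[n] ω))) 0) atTop = 0 ∧
      ∀ ε : ℝ, 0 < ε → ∀ᶠ n : ℕ in atTop, g (θ^[n] ω) ≤ Real.exp (ε * n) := by
  set f : Ω → ℝ := fun ω => max (Real.log (g ω)) 0 with hf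
  have hfmeas : Measurable f := (Real.measurable_log.comp hg).max measurable_const
  have hfnn : ∀ ω, 0 ≤ f ω := fun ω => le_max_right _ _
  have hgle : ∀ ω, g ω ≤ Real.exp (f ω) := by
    intro ω
    rcases eq_or_lt_of_le (hg0 ω) with h | h
    · exact le_trans h.symm.le (Real.exp_pos _).le
    · calc g ω = Real.exp (Real.log (g ω)) := (Real.exp_log h).symm
        _ ≤ Real.exp (f ω) := Real.exp_le_exp.2 (le_max_left _ _)
  -- summability of level sets
  have hsum : ∀ ε : ℝ, 0 < ε →
      (∑' n : ℕ, μ {ω | ε * n < f (θ^[n] ω)}) ≠ ∞ := by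
    intro ε hε
    have key : (∑' n : ℕ, μ {ω | (fun x => ε⁻¹ * f x) ω ∈ Set.Ioi (n : ℝ)}) < ∞ := by
      exact @ProbabilityTheory.tsum_prob_mem_Ioi_lt_top Ω (MeasureSpace.mk μ) ‹_›
        (fun x => ε⁻¹ * f x) (hint.const_mul _)
        (fun x => mul_nonneg (inv_nonneg.2 hε.le) (hfnn x))
    have heq : ∀ n : ℕ, μ {ω | ε * n < f (θ^[n] ω)}
        = μ {ω | (fun x => ε⁻¹ * f x) ω ∈ Set.Ioi (n : ℝ)} := by
      intro n
      have step1 : μ {ω | ε * n < f (θ^[n] ω)} = μ {x | ε * n < f x} :=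
        (hθ.iterate n).measure_preimage
          (measurableSet_lt measurable_const hfmeas).nullMeasurableSet
      rw [step1]
      congr 1
      ext x
      simp only [Set.mem_setOf_eq, Set.mem_Ioi]
      rw [lt_inv_mul_iff₀ hε]
    rw [funext heq] at *
    exact key.ne
  -- a.e., for every k, eventually f (θ^[n] ω) ≤ n / (k+1)
  have hae : ∀ᵐ ω ∂μ, ∀ k : ℕ, ∀ᶠ n : ℕ in atTop,
      f (θ^[n] ω) ≤ ((k : ℝ) + 1)⁻¹ * n := by
    rw [ae_all_iff]
    intro k
    have hk : (0:ℝ) < ((k : ℝ) + 1)⁻¹ := by positivity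
    have h0 := measure_setOf_frequently_eq_zero (μ := μ)
      (p := fun n ω => ((k : ℝ) + 1)⁻¹ * n < f (θ^[n] ω)) (hsum _ hk)
    simp only [MeasureTheory.ae_iff, not_eventually, not_le]
    exact h0
  filter_upwards [hae] with ω hω
  have hev : ∀ ε : ℝ, 0 < ε → ∀ᶠ n : ℕ in atTop, f (θ^[n] ω) ≤ ε * n := by
    intro ε hε
    obtain ⟨k, hk⟩ := exists_nat_gt ε⁻¹
    have hk' : ((k : ℝ) + 1)⁻¹ ≤ ε := by
      rw [inv_le_comm₀ (by positivity) hε]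
      exact le_trans hk.le (by linarith)
    filter_upwards [hω k] with n hn
    exact hn.trans (mul_le_mul_of_nonneg_right hk' (Nat.cast_nonneg n))
  constructor
  · have htend : Tendsto (fun n : ℕ => (n : ℝ)⁻¹ * f (θ^[n] ω)) atTop (nhds 0) := by
      rw [Metric.tendsto_atTop]
      intro ε hε
      have h2 := hev (ε/2) (by positivity)
      rw [eventually_atTop] at h2
      obtain ⟨N, hN⟩ := h2
      refine ⟨N + 1, fun n hn => ?_⟩
      have hn0 : (0:ℝ) < n := by exact_mod_cast Nat.lt_of_lt_of_le (Nat.succ_pos N) hn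
      have h1 : (0:ℝ) ≤ (n : ℝ)⁻¹ * f (θ^[n] ω) :=
        mul_nonneg (by positivity) (hfnn _)
      have h2 : (n : ℝ)⁻¹ * f (θ^[n] ω) ≤ ε/2 := by
        rw [inv_mul_le_iff₀ hn0]
        exact (hN n (le_trans (Nat.le_succ N) hn)).trans_eq (mul_comm _ _)
      rw [Real.dist_eq, sub_zero, abs_of_nonneg h1]
      linarith
    exact htend.limsup_eq
  · intro ε hε
    filter_upwards [hev ε hε] with n hn
    exact (hgle _).trans (Real.exp_le_exp.2 hn)
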